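/- (Sufficient decrease for proximal gradient descent.) Let f : ℝ^d → ℝ be differentiable with L_f-Lipschitz gradient, let λ ≥ 0, and let Φ(x) = f(x) + λ‖x‖₁. For any L > L_f/2, define the prox-grad map T_L(x) = S_{λ/L}(x − (1/L)∇f(x)) and the gradient mapping G_L(x) = L·(x − T_L(x)). Then for every x ∈ ℝ^d, Φ(x) − Φ(T_L(x)) ≥ ((L − L_f/2)/L²)·‖G_L(x)‖². In particular, each proximal gradient iteration with stepsize 1/L, L > L_f/2, does not increase Φ. -/

import Mathlib

open Set Finset

/-- 1D prox inequality for soft thresholding. -/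
lemma soft_one (c u y : ℝ) (hc : 0 ≤ c) :
    c * |Real.sign u * max (|u| - c) 0| + (Real.sign u * max (|u| - c) 0 - u) ^ 2 / 2
      + (y - Real.sign u * max (|u| - c) 0) ^ 2 / 2 ≤ c * |y| + (y - u) ^ 2 / 2 := by
  set t := Real.sign u * max (|u| - c) 0 with ht
  by_cases h : |u| ≤ c
  · have h0 : t = 0 := by simp [ht, max_eq_right (sub_nonpos.2 h)]
    rw [h0, abs_zero]
    have h1 : u * y ≤ |u| * |y| := by
      calc u * y ≤ |u * y| := le_abs_self _
        _ = |u| * |y| := abs_mul u y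
    have h2 : |u| * |y| ≤ c * |y| := mul_le_mul_of_nonneg_right h (abs_nonneg y)
    nlinarith [abs_nonneg y, abs_nonneg u]
  · push_neg at h
    have hm : max (|u| - c) 0 = |u| - c := max_eq_left (by linarith)
    rcases lt_trichotomy u 0 with hu | hu | hu
    · have hs : Real.sign u = -1 := Real.sign_of_neg hu
      have habs : |u| = -u := abs_of_neg hu
      have htv : t = u + c := by rw [ht, hs, hm, habs]; ring
      have h2 : |u + c| = -(u + c) := abs_of_neg (by rw [habs] at h; linarith)
      rw [htv, h2]
      nlinarith [neg_abs_le y]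
    · exfalso; rw [hu] at h; simp at h; linarith
    · have hs : Real.sign u = 1 := Real.sign_of_pos hu
      have habs : |u| = u := abs_of_pos hu
      have htv : t = u - c := by rw [ht, hs, hm, habs]; ring
      have h2 : |u - c| = u - c := abs_of_nonneg (by rw [habs] at h; linarith)
      rw [htv, h2]
      nlinarith [le_abs_self y]

/-- Descent lemma. -/
lemma descent_lemma {d : ℕ} (f : EuclideanSpace ℝ (Fin d) → ℝ) (Lf : ℝ)
    (hdiff : Differentiable ℝ f)
    (hlip : ∀ x y : EuclideanSpace ℝ (Fin d), ‖gradient f x - gradient f y‖ ≤ Lf * ‖x - y‖)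
    (x v : EuclideanSpace ℝ (Fin d)) :
    f (x + v) ≤ f x + (inner ℝ (gradient f x) v : ℝ) + Lf / 2 * ‖v‖ ^ 2 := by
  set a : ℝ := (inner ℝ (gradient f x) v : ℝ) with ha
  have hφ : ∀ t : ℝ, HasDerivAt (fun s : ℝ => f (x + s • v))
      ((inner ℝ (gradient f (x + t • v)) v : ℝ)) t := by
    intro t
    have h1 : HasDerivAt (fun s : ℝ => x + s • v) v t := by
      simpa using ((hasDerivAt_id t).smul_const v).const_add x
    have h2 : HasFDerivAt f (InnerProductSpace.toDual ℝ _ (gradient f (x + t • v)))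
        (x + t • v) := hasGradientAt_iff_hasFDerivAt.mp (hdiff _).hasGradientAt
    have := h2.comp_hasDerivAt t h1
    exact this
  set ψ : ℝ → ℝ := fun t => f (x + t • v) - t * a - Lf / 2 * ‖v‖ ^ 2 * t ^ 2 with hψdef
  have hψ : ∀ t : ℝ, HasDerivAt ψ
      ((inner ℝ (gradient f (x + t • v)) v : ℝ) - a - Lf / 2 * ‖v‖ ^ 2 * (2 * t)) t := by
    intro t
    have h3 : HasDerivAt (fun s : ℝ => s * a) a t := by
      simpa using (hasDerivAt_id t).mul_const a
    have h4 : HasDerivAt (fun s : ℝ => Lf / 2 * ‖v‖ ^ 2 * s ^ 2)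
        (Lf / 2 * ‖v‖ ^ 2 * (2 * t)) t := by
      simpa [mul_comm] using (hasDerivAt_pow 2 t).const_mul (Lf / 2 * ‖v‖ ^ 2)
    exact ((hφ t).sub h3).sub h4
  have hanti : AntitoneOn ψ (Icc (0:ℝ) 1) := by
    apply antitoneOn_of_hasDerivWithinAt_nonpos (convex_Icc 0 1)
      (fun t _ => ((hψ t).continuousAt).continuousWithinAt)
      (fun t _ => ((hψ t).hasDerivWithinAt))
    intro t htmem
    rw [interior_Icc] at htmem
    have hip : (inner ℝ (gradient f (x + t • v)) v : ℝ) - a ≤ Lf * t * ‖v‖ ^ 2 := by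
      have h5 : (inner ℝ (gradient f (x + t • v)) v : ℝ) - a
          = (inner ℝ (gradient f (x + t • v) - gradient f x) v : ℝ) := by
        rw [inner_sub_left]
      rw [h5]
      calc (inner ℝ (gradient f (x + t • v) - gradient f x) v : ℝ)
          ≤ ‖gradient f (x + t • v) - gradient f x‖ * ‖v‖ := real_inner_le_norm _ _
        _ ≤ (Lf * ‖x + t • v - x‖) * ‖v‖ := by
            have := hlip (x + t • v) x
            exact mul_le_mul_of_nonneg_right this (norm_nonneg v)
        _ = Lf * t * ‖v‖ ^ 2 := by
            rw [add_sub_cancel_left, norm_smul]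
            simp [abs_of_pos htmem.1, Real.norm_eq_abs]
            ring
    linarith [hip]
  have h01 : ψ 1 ≤ ψ 0 := hanti (by constructor <;> norm_num) (by constructor <;> norm_num) zero_le_one
  simp only [hψdef, one_smul, zero_smul, add_zero] at h01
  nlinarith [h01]


/-- Soft-thresholding operator `S_c` on `ℝ^d`, defined componentwise by
`(S_c x)_i = sign(x_i) * max (|x_i| - c) 0`. -/
noncomputable def soft {d : ℕ} (c : ℝ) (x : EuclideanSpace ℝ (Fin d)) :
    EuclideanSpace ℝ (Fin d) :=
  WithLp.toLp 2 fun i => Real.sign (x i) * max (|x i| - c) 0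

/-- Sufficient decrease for proximal gradient descent: with the prox-grad map
`T_L(x) = S_{λ/L}(x − (1/L)∇f(x))` and gradient mapping `G_L(x) = L(x − T_L(x))`,
each step decreases `Φ = f + λ‖·‖₁` by at least `((L − L_f/2)/L²)‖G_L(x)‖²`. -/
theorem prox_sufficient_decrease (d : ℕ) (hd : 1 ≤ d)
    (f : EuclideanSpace ℝ (Fin d) → ℝ) (Lf : ℝ) (hLf : 0 ≤ Lf)
    (hdiff : Differentiable ℝ f)
    (hlip : ∀ x y : EuclideanSpace ℝ (Fin d), ‖gradient f x - gradient f y‖ ≤ Lf * ‖x - y‖)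
    (lam : ℝ) (hlam : 0 ≤ lam)
    (Φ : EuclideanSpace ℝ (Fin d) → ℝ) (hΦ : ∀ x, Φ x = f x + lam * ∑ i, |x i|)
    (L : ℝ) (hL : Lf / 2 < L)
    (Tmap Gmap : EuclideanSpace ℝ (Fin d) → EuclideanSpace ℝ (Fin d))
    (hTL : ∀ x, Tmap x = soft (lam / L) (x - (1 / L) • gradient f x))
    (hGL : ∀ x, Gmap x = L • (x - Tmap x)) :
    ∀ x : EuclideanSpace ℝ (Fin d),
      ((L - Lf / 2) / L ^ 2) * ‖Gmap x‖ ^ 2 ≤ Φ x - Φ (Tmap x) ∧ Φ (Tmap x) ≤ Φ x := by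
  intro x
  have hL0 : (0:ℝ) < L := lt_of_le_of_lt (by linarith) hL
  set g : EuclideanSpace ℝ (Fin d) := gradient f x with hg
  set T : EuclideanSpace ℝ (Fin d) := Tmap x with hT
  set c : ℝ := lam / L with hcdef
  have hc : 0 ≤ c := div_nonneg hlam hL0.le
  have hTi : ∀ i, T i = Real.sign (x i - (1/L) * g i) * max (|x i - (1/L) * g i| - c) 0 := by
    intro i
    rw [hT, hTL x]
    simp [soft, PiLp.sub_apply, PiLp.smul_apply, smul_eq_mul, one_div, ← hg]
  have hL' : L ≠ 0 := hL0.ne'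
  have hcL : c * L = lam := div_mul_cancel₀ lam hL'
  have keyL : ∀ i, lam * |T i| + L * (x i - T i)^2 + g i * (T i - x i) ≤ lam * |x i| := by
    intro i
    have h := soft_one c (x i - (1/L) * g i) (x i) hc
    rw [← hTi i] at h
    have h2 := mul_le_mul_of_nonneg_left h hL0.le
    have e1 : L * (c * |T i| + (T i - (x i - 1/L * g i))^2/2 + (x i - T i)^2/2)
        = lam * |T i| + L * (x i - T i)^2 + g i * (T i - x i) + (g i)^2/(2*L) := by
      rw [← hcL]; field_simp; ring
    have e2 : L * (c * |x i| + (x i - (x i - 1/L * g i))^2/2)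
        = lam * |x i| + (g i)^2/(2*L) := by
      rw [← hcL]; field_simp; ring
    rw [e1, e2] at h2
    linarith
  have hsum : lam * (∑ i, |T i|) + L * (∑ i, (x i - T i)^2) + (∑ i, g i * (T i - x i))
      ≤ lam * ∑ i, |x i| := by
    have h := Finset.sum_le_sum (fun i (_ : i ∈ Finset.univ) => keyL i)
    rw [Finset.sum_add_distrib, Finset.sum_add_distrib, ← Finset.mul_sum, ← Finset.mul_sum,
      ← Finset.mul_sum] at h
    exact h
  have hS : ‖x - T‖ ^ 2 = ∑ i, (x i - T i)^2 := by
    rw [← real_inner_self_eq_norm_sq]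
    simp only [PiLp.inner_apply, RCLike.inner_apply, conj_trivial, PiLp.sub_apply]
    exact Finset.sum_congr rfl fun i _ => by ring
  have hP : (inner ℝ g (T - x) : ℝ) = ∑ i, g i * (T i - x i) := by
    simp only [PiLp.inner_apply, RCLike.inner_apply, conj_trivial, PiLp.sub_apply]
    exact Finset.sum_congr rfl fun i _ => by ring
  have hdesc : f T ≤ f x + (inner ℝ g (T - x) : ℝ) + Lf/2 * ‖x - T‖^2 := by
    have h := descent_lemma f Lf hdiff hlip x (T - x)
    rw [show x + (T - x) = T by abel, norm_sub_rev] at h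
    exact h
  have hG : ‖Gmap x‖ ^ 2 = L ^ 2 * ‖x - T‖ ^ 2 := by
    rw [hGL x, ← hT, norm_smul, Real.norm_eq_abs, abs_of_pos hL0, mul_pow]
  have hfin : ((L - Lf / 2) / L ^ 2) * ‖Gmap x‖ ^ 2 = (L - Lf/2) * ‖x - T‖^2 := by
    rw [hG]; field_simp
  have hmain : (L - Lf/2) * ‖x - T‖^2 ≤ Φ x - Φ T := by
    rw [hΦ x, hΦ T, hS]
    rw [hS, hP] at hdesc
    linarith
  have hnn : 0 ≤ (L - Lf/2) * ‖x - T‖^2 := mul_nonneg (by linarith) (by positivity)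
  constructor
  · rw [hfin]; exact hmain
  · linarith
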